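/- arXiv:2005.11720 — 4 statements merged into one kernel-verified Lean document; each statement's English description precedes it below -/
import Mathlib

section
/- For every regressor g with 𝔼[g(X,S)²] < ∞, one has R(g) − R* ≥ Σ_{s=1}^k π_s · W₂²(μ_s, ν_s(g)). Consequently, for every class 𝒢 of such regressors, inf_{g∈𝒢} R(g) − R* ≥ inf_{g∈𝒢} Σ_{s=1}^k π_s W₂²(μ_s, ν_s(g)). (Theorem 1, lower bound.) -/
open MeasureTheory ProbabilityTheory

/-- Squared 2-Wasserstein distance between measures on ℝ: infimum of ∫|x−y|² dγ over
couplings γ of P and Q. -/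
noncomputable def W2sq (P Q : Measure ℝ) : ℝ :=
  sInf { c : ℝ | ∃ γ : Measure (ℝ × ℝ),
    γ.map Prod.fst = P ∧ γ.map Prod.snd = Q ∧ c = ∫ z, (z.1 - z.2) ^ 2 ∂γ }

/-- Product of two L² functions is integrable. -/
lemma memL2_mul_integrable {α : Type*} {mα : MeasurableSpace α} {μ : Measure α}
    {f g : α → ℝ} (hf : MemLp f 2 μ) (hg : MemLp g 2 μ) :
    Integrable (fun x => f x * g x) μ := by
  have h1 : Integrable (fun x => (f x + g x) ^ 2) μ := by
    simpa using (hf.add hg).integrable_sq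
  have h : Integrable (fun x => ((f x + g x) ^ 2 - f x ^ 2 - g x ^ 2) / 2) μ :=
    ((h1.sub hf.integrable_sq).sub hg.integrable_sq).div_const 2
  refine h.congr (Filter.Eventually.of_forall fun x => ?_)
  ring

/-- The conditional expectation of an L² function is L². -/
lemma memL2_condexp {α : Type*} {m m0 : MeasurableSpace α} {μ : Measure α}
    [IsFiniteMeasure μ] (hm : m ≤ m0) {f : α → ℝ} (hf : MemLp f 2 μ) :
    MemLp (μ[f|m]) 2 μ := by
  haveI : SigmaFinite (μ.trim hm) := inferInstance
  set c : Lp ℝ 2 μ := (condExpL2 ℝ ℝ hm (hf.toLp f) : Lp ℝ 2 μ) with hc_def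
  have hc : (c : α → ℝ) =ᵐ[μ] μ[f|m] := by
    refine ae_eq_condExp_of_forall_setIntegral_eq hm (hf.integrable one_le_two)
      (fun s _ _ => ((Lp.memLp c).integrable one_le_two).integrableOn)
      (fun s hs hμs => ?_) ?_
    · rw [hc_def]
      rw [integral_condExpL2_eq hm (hf.toLp f) hs hμs.ne]
      exact setIntegral_congr_ae (hm s hs) ((hf.coeFn_toLp).mono fun x hx _ => hx)
    · exact lpMeas.aestronglyMeasurable _
  exact (Lp.memLp c).ae_eq hc

/-- Pythagorean identity for the conditional expectation. -/
lemma pythagoras_condexp {α : Type*} {m m0 : MeasurableSpace α} {μ : Measure α}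
    [IsProbabilityMeasure μ] (hm : m ≤ m0) {Y H G : α → ℝ}
    (hY2 : MemLp Y 2 μ) (hHm : StronglyMeasurable[m] H) (hGm : StronglyMeasurable[m] G)
    (hG2 : MemLp G 2 μ) (hHBayes : H =ᵐ[μ] μ[Y|m]) :
    (∫ ω, (Y ω - G ω) ^ 2 ∂μ) - ∫ ω, (Y ω - H ω) ^ 2 ∂μ = ∫ ω, (H ω - G ω) ^ 2 ∂μ := by
  haveI : SigmaFinite (μ.trim hm) := inferInstance
  have hH2 : MemLp H 2 μ := (memL2_condexp hm hY2).ae_eq hHBayes.symm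
  have horth : ∀ ψ : α → ℝ, StronglyMeasurable[m] ψ → MemLp ψ 2 μ →
      ∫ ω, ψ ω * Y ω ∂μ = ∫ ω, ψ ω * H ω ∂μ := by
    intro ψ hψm hψ2
    have hint : Integrable (fun ω => ψ ω * Y ω) μ := memL2_mul_integrable hψ2 hY2
    have h1 : μ[(fun ω => ψ ω * Y ω)|m] =ᵐ[μ] fun ω => ψ ω * (μ[Y|m]) ω :=
      condExp_mul_of_stronglyMeasurable_left (μ := μ) hψm hint (hY2.integrable one_le_two)
    calc ∫ ω, ψ ω * Y ω ∂μ
        = ∫ ω, (μ[(fun ω => ψ ω * Y ω)|m]) ω ∂μ := (integral_condExp hm).symm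
      _ = ∫ ω, ψ ω * (μ[Y|m]) ω ∂μ := integral_congr_ae h1
      _ = ∫ ω, ψ ω * H ω ∂μ :=
          integral_congr_ae (hHBayes.mono fun ω hω => by simp only []; rw [hω])
  have hHG2 : MemLp (fun ω => H ω - G ω) 2 μ := hH2.sub hG2
  have hHGm : StronglyMeasurable[m] (fun ω => H ω - G ω) := hHm.sub hGm
  have hiHG : Integrable (fun ω => (H ω - G ω) ^ 2) μ := hHG2.integrable_sq
  have hcross : ∫ ω, (H ω - G ω) * (Y ω - H ω) ∂μ = 0 := by
    have h1 : ∫ ω, (H ω - G ω) * Y ω ∂μ = ∫ ω, (H ω - G ω) * H ω ∂μ :=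
      horth _ hHGm hHG2
    have hi1 : Integrable (fun ω => (H ω - G ω) * Y ω) μ :=
      memL2_mul_integrable hHG2 hY2
    have hi2 : Integrable (fun ω => (H ω - G ω) * H ω) μ :=
      memL2_mul_integrable hHG2 hH2
    have e : (fun ω => (H ω - G ω) * (Y ω - H ω))
        = fun ω => (H ω - G ω) * Y ω - (H ω - G ω) * H ω := funext fun ω => by ring
    rw [e, integral_sub hi1 hi2, h1, sub_self]
  have hYG : MemLp (fun ω => Y ω - G ω) 2 μ := hY2.sub hG2
  have hYH : MemLp (fun ω => Y ω - H ω) 2 μ := hY2.sub hH2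
  have hiYG : Integrable (fun ω => (Y ω - G ω) ^ 2) μ := hYG.integrable_sq
  have hiYH : Integrable (fun ω => (Y ω - H ω) ^ 2) μ := hYH.integrable_sq
  have hiC : Integrable (fun ω => (H ω - G ω) * (Y ω - H ω)) μ :=
    memL2_mul_integrable hHG2 hYH
  rw [← integral_sub hiYG hiYH]
  have e : (fun ω => (Y ω - G ω) ^ 2 - (Y ω - H ω) ^ 2)
      = fun ω => (H ω - G ω) ^ 2 + 2 * ((H ω - G ω) * (Y ω - H ω)) :=
    funext fun ω => by ring
  rw [e, integral_add hiHG (hiC.const_mul 2), integral_const_mul, hcross,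
    mul_zero, add_zero]

/-- **Theorem 1 (lower bound).**
For every regressor `g` with `𝔼[g(X,S)²] < ∞`,
`R(g) − R* ≥ Σ_s π_s W₂²(μ_s, ν_s(g))`, and consequently for every class `𝒢` of such
regressors, `inf_{g∈𝒢} (R(g) − R*) ≥ inf_{g∈𝒢} Σ_s π_s W₂²(μ_s, ν_s(g))`. -/
theorem fairness_lower_bound
    {Ω : Type*} [MeasurableSpace Ω] (Pr : Measure Ω) [IsProbabilityMeasure Pr]
    (d k : ℕ) (hk : 0 < k)
    (X : Ω → EuclideanSpace ℝ (Fin d)) (S : Ω → Fin k) (Y : Ω → ℝ)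
    (hX : Measurable X) (hS : Measurable S) (hY : Measurable Y)
    (hY2 : MemLp Y 2 Pr)
    (π : Fin k → ℝ) (hπ : ∀ s, π s = (Pr (S ⁻¹' {s})).toReal) (hπpos : ∀ s, 0 < π s)
    -- the Bayes regressor: `η(X,S) = 𝔼[Y | X,S]` a.s.
    (η : EuclideanSpace ℝ (Fin d) × Fin k → ℝ) (hη : Measurable η)
    (hηBayes : (fun ω => η (X ω, S ω))
      =ᵐ[Pr] MeasureTheory.condExp
        (MeasurableSpace.comap (fun ω => (X ω, S ω)) inferInstance) Pr Y)
    -- risk of a regressor and the Bayes risk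
    (R : (EuclideanSpace ℝ (Fin d) × Fin k → ℝ) → ℝ)
    (hR : ∀ g, R g = ∫ ω, (Y ω - g (X ω, S ω)) ^ 2 ∂Pr)
    (Rstar : ℝ) (hRstar : Rstar = ∫ ω, (Y ω - η (X ω, S ω)) ^ 2 ∂Pr)
    -- conditional distributions given `S = s`
    (μ : Fin k → Measure ℝ)
    (hμ : ∀ s, μ s = (Pr[|S ⁻¹' {s}]).map (fun ω => η (X ω, S ω)))
    (ν : (EuclideanSpace ℝ (Fin d) × Fin k → ℝ) → Fin k → Measure ℝ)
    (hν : ∀ g s, ν g s = (Pr[|S ⁻¹' {s}]).map (fun ω => g (X ω, S ω))) :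
    (∀ g : EuclideanSpace ℝ (Fin d) × Fin k → ℝ,
        Measurable g → MemLp (fun ω => g (X ω, S ω)) 2 Pr →
        R g - Rstar ≥ ∑ s, π s * W2sq (μ s) (ν g s)) ∧
    (∀ 𝒢 : Set (EuclideanSpace ℝ (Fin d) × Fin k → ℝ),
        (∀ g ∈ 𝒢, Measurable g ∧ MemLp (fun ω => g (X ω, S ω)) 2 Pr) →
        sInf ((fun g => R g - Rstar) '' 𝒢)
          ≥ sInf ((fun g => ∑ s, π s * W2sq (μ s) (ν g s)) '' 𝒢)) := by
  classical
  have hφ : Measurable (fun ω => (X ω, S ω)) := hX.prodMk hS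
  have hm : MeasurableSpace.comap (fun ω => (X ω, S ω)) inferInstance
      ≤ (inferInstance : MeasurableSpace Ω) := hφ.comap_le
  have hφm : Measurable[MeasurableSpace.comap (fun ω => (X ω, S ω)) inferInstance]
      (fun ω => (X ω, S ω)) := Measurable.of_comap_le le_rfl
  set H : Ω → ℝ := fun ω => η (X ω, S ω) with hHdef
  have hHmble : Measurable H := hη.comp hφ
  have hHm : StronglyMeasurable[MeasurableSpace.comap (fun ω => (X ω, S ω)) inferInstance] H :=
    (hη.comp hφm).stronglyMeasurable
  have hH2 : MemLp H 2 Pr := (memL2_condexp hm hY2).ae_eq hηBayes.symm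
  have hW2nonneg : ∀ (P Q : Measure ℝ), 0 ≤ W2sq P Q := by
    intro P Q
    refine Real.sInf_nonneg ?_
    rintro c ⟨γ, -, -, rfl⟩
    exact integral_nonneg fun z => sq_nonneg _
  have hA : ∀ s : Fin k, MeasurableSet (S ⁻¹' {s}) := fun s => hS (measurableSet_singleton s)
  have main : ∀ g : EuclideanSpace ℝ (Fin d) × Fin k → ℝ,
      Measurable g → MemLp (fun ω => g (X ω, S ω)) 2 Pr →
      R g - Rstar ≥ ∑ s, π s * W2sq (μ s) (ν g s) := by
    intro g hgmble hG2
    set G : Ω → ℝ := fun ω => g (X ω, S ω) with hGdef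
    have hGmble : Measurable G := hgmble.comp hφ
    have hGm : StronglyMeasurable[MeasurableSpace.comap (fun ω => (X ω, S ω)) inferInstance] G :=
      (hgmble.comp hφm).stronglyMeasurable
    have hHG2 : MemLp (fun ω => H ω - G ω) 2 Pr := hH2.sub hG2
    have hiHG : Integrable (fun ω => (H ω - G ω) ^ 2) Pr := hHG2.integrable_sq
    -- Pythagoras
    have hpyth : R g - Rstar = ∫ ω, (H ω - G ω) ^ 2 ∂Pr := by
      rw [hR, hRstar]
      exact pythagoras_condexp hm hY2 hHm hGm hG2 hηBayes
    -- partition over values of S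
    have hPr0 : ∀ s : Fin k, (Pr (S ⁻¹' {s})).toReal ≠ 0 := by
      intro s
      have := hπpos s
      rw [hπ s] at this
      exact this.ne'
    have hsplit : ∫ ω, (H ω - G ω) ^ 2 ∂Pr
        = ∑ s, π s * ∫ ω, (H ω - G ω) ^ 2 ∂(Pr[|S ⁻¹' {s}]) := by
      have step1 : ∀ s : Fin k, π s * ∫ ω, (H ω - G ω) ^ 2 ∂(Pr[|S ⁻¹' {s}])
          = ∫ ω in S ⁻¹' {s}, (H ω - G ω) ^ 2 ∂Pr := by
        intro s
        rw [ProbabilityTheory.cond, integral_smul_measure, hπ s, smul_eq_mul, ← mul_assoc,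
          ENNReal.toReal_inv, mul_inv_cancel₀ (hPr0 s), one_mul]
      calc ∫ ω, (H ω - G ω) ^ 2 ∂Pr
          = ∫ ω, ∑ s : Fin k, (S ⁻¹' {s}).indicator (fun ω => (H ω - G ω) ^ 2) ω ∂Pr := by
            refine integral_congr_ae (Filter.Eventually.of_forall fun ω => ?_)
            beta_reduce
            rw [Finset.sum_eq_single (S ω)]
            · rw [Set.indicator_of_mem (by simp : ω ∈ S ⁻¹' {S ω})]
            · intro b _ hb
              exact Set.indicator_of_notMem (by simp [Ne.symm hb]) _
            · simp
        _ = ∑ s : Fin k, ∫ ω, (S ⁻¹' {s}).indicator (fun ω => (H ω - G ω) ^ 2) ω ∂Pr :=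
            integral_finset_sum _ (fun s _ => hiHG.indicator (hA s))
        _ = ∑ s : Fin k, ∫ ω in S ⁻¹' {s}, (H ω - G ω) ^ 2 ∂Pr :=
            Finset.sum_congr rfl fun s _ => integral_indicator (hA s)
        _ = ∑ s, π s * ∫ ω, (H ω - G ω) ^ 2 ∂(Pr[|S ⁻¹' {s}]) :=
            Finset.sum_congr rfl fun s _ => (step1 s).symm
    -- Wasserstein bound
    have hw2 : ∀ s : Fin k, W2sq (μ s) (ν g s) ≤ ∫ ω, (H ω - G ω) ^ 2 ∂(Pr[|S ⁻¹' {s}]) := by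
      intro s
      have hpair : Measurable (fun ω => (H ω, G ω)) := hHmble.prodMk hGmble
      have hmem : (∫ ω, (H ω - G ω) ^ 2 ∂(Pr[|S ⁻¹' {s}])) ∈
          { c : ℝ | ∃ γ : Measure (ℝ × ℝ),
            γ.map Prod.fst = μ s ∧ γ.map Prod.snd = ν g s ∧
            c = ∫ z, (z.1 - z.2) ^ 2 ∂γ } := by
        refine ⟨(Pr[|S ⁻¹' {s}]).map (fun ω => (H ω, G ω)), ?_, ?_, ?_⟩
        · rw [Measure.map_map measurable_fst hpair, hμ s]
          rfl
        · rw [Measure.map_map measurable_snd hpair, hν g s]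
          rfl
        · rw [integral_map (f := fun z : ℝ × ℝ => (z.1 - z.2) ^ 2) hpair.aemeasurable
            (((measurable_fst.sub measurable_snd).pow_const 2).aestronglyMeasurable)]
      refine csInf_le ⟨0, ?_⟩ hmem
      rintro c ⟨γ, -, -, rfl⟩
      exact integral_nonneg fun z => sq_nonneg _
    calc ∑ s, π s * W2sq (μ s) (ν g s)
        ≤ ∑ s, π s * ∫ ω, (H ω - G ω) ^ 2 ∂(Pr[|S ⁻¹' {s}]) :=
          Finset.sum_le_sum fun s _ => mul_le_mul_of_nonneg_left (hw2 s) (hπpos s).le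
      _ = ∫ ω, (H ω - G ω) ^ 2 ∂Pr := hsplit.symm
      _ = R g - Rstar := hpyth.symm
  refine ⟨main, ?_⟩
  intro 𝒢 h𝒢
  rcases Set.eq_empty_or_nonempty 𝒢 with h | ⟨g0, hg0⟩
  · simp [h]
  · have hsum0 : ∀ g, 0 ≤ ∑ s, π s * W2sq (μ s) (ν g s) :=
      fun g => Finset.sum_nonneg fun s _ => mul_nonneg (hπpos s).le (hW2nonneg _ _)
    have hbdd : BddBelow ((fun g => ∑ s, π s * W2sq (μ s) (ν g s)) '' 𝒢) := by
      refine ⟨0, ?_⟩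
      rintro x ⟨g, -, rfl⟩
      exact hsum0 g
    refine le_csInf (Set.Nonempty.image _ ⟨g0, hg0⟩) ?_
    rintro b ⟨g, hg, rfl⟩
    obtain ⟨hgm, hg2⟩ := h𝒢 g hg
    exact (csInf_le hbdd ⟨g, hg, rfl⟩).trans (main g hgm hg2)
end

section
/- Let μ_1,…,μ_k be probability measures on ℝ with finite second moments and let π_1,…,π_k > 0 with Σ_{s=1}^k π_s = 1. Define ν̄ as the pushforward of Unif(0,1) under u ↦ Σ_{s=1}^k π_s F_{μ_s}⁻¹(u). Then for every probability measure ν on ℝ with finite second moment, Σ_{s=1}^k π_s W₂²(μ_s, ν̄) ≤ Σ_{s=1}^k π_s W₂²(μ_s, ν); that is, ν̄ is a 2-Wasserstein barycenter of μ_1,…,μ_k with weights (π_s). (The quantile-average construction of the barycenter used in Section 4.) -/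
open MeasureTheory ProbabilityTheory

/-- CDF of a measure on ℝ. -/
noncomputable def cdf' (μ : Measure ℝ) (x : ℝ) : ℝ := (μ (Set.Iic x)).toReal

/-- Quantile function of a measure on ℝ: `F_μ⁻¹(u) = inf {x : F_μ(x) ≥ u}`. -/
noncomputable def quantile' (μ : Measure ℝ) (u : ℝ) : ℝ := sInf { x : ℝ | u ≤ cdf' μ x }

/-- Uniform distribution on (0,1): Lebesgue measure restricted to (0,1). -/
noncomputable def unif01 : Measure ℝ := volume.restrict (Set.Ioo 0 1)

open Set
open scoped ENNReal

instance : IsProbabilityMeasure unif01 := by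
  constructor
  simp [unif01, Real.volume_Ioo]

section quantile
variable (μ : Measure ℝ) [IsProbabilityMeasure μ]

lemma cdf'_eq (x : ℝ) : cdf' μ x = cdf μ x := (cdf_eq_real μ x).symm

lemma quantile_set_nonempty {u : ℝ} (hu : u < 1) : { x : ℝ | u ≤ cdf' μ x }.Nonempty := by
  have h := tendsto_cdf_atTop (μ := μ)
  have : ∀ᶠ x in Filter.atTop, u < cdf μ x := h.eventually_const_lt hu
  obtain ⟨x, hx⟩ := this.exists
  exact ⟨x, by rw [mem_setOf_eq, cdf'_eq]; exact hx.le⟩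

lemma quantile_set_bddBelow {u : ℝ} (hu : 0 < u) : BddBelow { x : ℝ | u ≤ cdf' μ x } := by
  have h := tendsto_cdf_atBot (μ := μ)
  have : ∀ᶠ x in Filter.atBot, cdf μ x < u := h.eventually_lt_const hu
  obtain ⟨x, hx⟩ := this.exists
  refine ⟨x, fun y hy => ?_⟩
  by_contra hxy
  push_neg at hxy
  rw [mem_setOf_eq, cdf'_eq] at hy
  exact absurd (hy.trans (monotone_cdf (μ := μ) hxy.le)) (not_le.2 hx)

/-- Galois connection for the quantile function. -/
lemma quantile_le_iff {u : ℝ} (hu0 : 0 < u) (hu1 : u < 1) (x : ℝ) :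
    quantile' μ u ≤ x ↔ u ≤ cdf' μ x := by
  constructor
  · intro h
    rw [cdf'_eq]
    have hrc : ContinuousWithinAt (cdf μ) (Ici x) x := (cdf μ).right_continuous x
    by_contra hlt
    push_neg at hlt
    have h1 : ∀ᶠ y in nhdsWithin x (Ici x), cdf μ y < u := hrc.eventually_lt_const hlt
    have h2 : ∀ᶠ y in nhdsWithin x (Ioi x), cdf μ y < u :=
      h1.filter_mono (nhdsWithin_mono x Ioi_subset_Ici_self)
    have h3 : ∀ᶠ y in nhdsWithin x (Ioi x), y ∈ Ioi x := self_mem_nhdsWithin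
    obtain ⟨z, hzu, hzx⟩ := (h2.and h3).exists
    have hne := quantile_set_nonempty μ hu1
    have hbd := quantile_set_bddBelow μ hu0
    obtain ⟨y, hy, hylt⟩ := (csInf_lt_iff hbd hne).1
      (show quantile' μ u < z from lt_of_le_of_lt h hzx)
    rw [mem_setOf_eq, cdf'_eq] at hy
    exact absurd (hy.trans (monotone_cdf (μ := μ) hylt.le)) (not_le.2 hzu)
  · intro h
    exact csInf_le (quantile_set_bddBelow μ hu0) h

lemma quantile_monotoneOn : MonotoneOn (quantile' μ) (Ioo 0 1) := by
  intro u hu v hv huv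
  exact csInf_le_csInf (quantile_set_bddBelow μ hu.1) (quantile_set_nonempty μ hv.2)
    (fun x hx => le_trans huv hx)

lemma quantile_aemeasurable : AEMeasurable (quantile' μ) unif01 :=
  aemeasurable_restrict_of_monotoneOn measurableSet_Ioo (quantile_monotoneOn μ)

/-- Inverse transform sampling. -/
lemma unif01_map_quantile : unif01.map (quantile' μ) = μ := by
  have ham := quantile_aemeasurable μ
  have : IsProbabilityMeasure (unif01.map (quantile' μ)) :=
    Measure.isProbabilityMeasure_map ham
  refine Measure.ext_of_Iic (unif01.map (quantile' μ)) μ (fun x => ?_)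
  rw [Measure.map_apply_of_aemeasurable ham measurableSet_Iic]
  have hcdf0 : 0 ≤ cdf μ x := cdf_nonneg μ x
  have hcdf1 : cdf μ x ≤ 1 := cdf_le_one μ x
  have hset : (Ioo (0:ℝ) 1) ∩ (quantile' μ ⁻¹' Iic x) = Ioo (0:ℝ) 1 ∩ Iic (cdf μ x) := by
    ext u
    simp only [mem_inter_iff, mem_Ioo, mem_preimage, mem_Iic, and_congr_right_iff]
    intro hu
    rw [show (quantile' μ u ≤ x ↔ u ≤ cdf' μ x) from quantile_le_iff μ hu.1 hu.2 x, cdf'_eq]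
  have : unif01 (quantile' μ ⁻¹' Iic x) = volume (Ioo (0:ℝ) 1 ∩ Iic (cdf μ x)) := by
    rw [unif01, Measure.restrict_apply' measurableSet_Ioo, inter_comm, hset]
  rw [this, ← ofReal_cdf (μ := μ) x]
  rcases lt_or_ge (cdf μ x) 1 with hlt | hge
  · have : Ioo (0:ℝ) 1 ∩ Iic (cdf μ x) = Ioc (0:ℝ) (cdf μ x) := by
      ext u; simp only [mem_inter_iff, mem_Ioo, mem_Iic, mem_Ioc]
      constructor
      · rintro ⟨⟨h1, _⟩, h3⟩; exact ⟨h1, h3⟩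
      · rintro ⟨h1, h2⟩; exact ⟨⟨h1, lt_of_le_of_lt h2 hlt⟩, h2⟩
    rw [this, Real.volume_Ioc, sub_zero]
  · have hone : cdf μ x = 1 := le_antisymm hcdf1 hge
    have : Ioo (0:ℝ) 1 ∩ Iic (cdf μ x) = Ioo (0:ℝ) 1 := by
      rw [hone]
      exact inter_eq_left.2 (fun u hu => le_of_lt hu.2)
    rw [this, Real.volume_Ioo, hone]
    norm_num

end quantile

/-- indicator of the interval between the two coordinates -/
noncomputable def aI (z : ℝ × ℝ) (s : ℝ) : ℝ≥0∞ :=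
  if min z.1 z.2 ≤ s ∧ s < max z.1 z.2 then 1 else 0

def mset (s t : ℝ) : Set (ℝ × ℝ) :=
  {z | (min z.1 z.2 ≤ s ∧ s < max z.1 z.2) ∧ (min z.1 z.2 ≤ t ∧ t < max z.1 z.2)}

lemma measurable_aI : Measurable (fun p : (ℝ × ℝ) × ℝ => aI p.1 p.2) := by
  unfold aI
  have hE : MeasurableSet {p : (ℝ × ℝ) × ℝ | min p.1.1 p.1.2 ≤ p.2 ∧ p.2 < max p.1.1 p.1.2} := by
    apply MeasurableSet.inter
    · exact measurableSet_le ((measurable_fst.comp measurable_fst).min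
        (measurable_snd.comp measurable_fst)) measurable_snd
    · exact measurableSet_lt measurable_snd ((measurable_fst.comp measurable_fst).max
        (measurable_snd.comp measurable_fst))
  exact Measurable.ite hE measurable_const measurable_const

lemma measurable_mset (s t : ℝ) : MeasurableSet (mset s t) := by
  unfold mset
  refine ((measurableSet_le (measurable_fst.min measurable_snd) measurable_const).inter
    (measurableSet_lt measurable_const (measurable_fst.max measurable_snd))).inter
    ((measurableSet_le (measurable_fst.min measurable_snd) measurable_const).inter
    (measurableSet_lt measurable_const (measurable_fst.max measurable_snd)))

lemma aI_lintegral (z : ℝ × ℝ) : ∫⁻ s, aI z s = ENNReal.ofReal |z.1 - z.2| := by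
  have h : (fun s => aI z s) = (Ico (min z.1 z.2) (max z.1 z.2)).indicator
      (1 : ℝ → ℝ≥0∞) := by
    funext s
    simp [aI, Set.indicator_apply, mem_Ico]
  rw [h]
  rw [lintegral_indicator_one measurableSet_Ico, Real.volume_Ico]
  congr 1
  rcases le_total z.1 z.2 with h | h
  · rw [max_eq_right h, min_eq_left h, abs_of_nonpos (by linarith)]; ring
  · rw [max_eq_left h, min_eq_right h, abs_of_nonneg (by linarith)]

lemma aI_mul_eq_indicator (s t : ℝ) (z : ℝ × ℝ) :
    aI z s * aI z t = (mset s t).indicator (1 : (ℝ × ℝ) → ℝ≥0∞) z := by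
  simp only [aI, mset, Set.indicator_apply, mem_setOf_eq]
  by_cases h1 : min z.1 z.2 ≤ s ∧ s < max z.1 z.2 <;>
    by_cases h2 : min z.1 z.2 ≤ t ∧ t < max z.1 z.2 <;> simp only [h1, h2] <;> simp

lemma pointwise_id (x y s t : ℝ) :
    (if (min x y ≤ s ∧ s < max x y) ∧ (min x y ≤ t ∧ t < max x y) then (1:ℝ≥0∞) else 0)
      + ((if s < x ∧ t < y then 1 else 0) + (if s < y ∧ t < x then 1 else 0))
    = (if s < x ∧ t < x then 1 else 0) + (if s < y ∧ t < y then 1 else 0) := by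
  rcases le_total x y with h | h <;>
    [rw [min_eq_left h, max_eq_right h]; rw [min_eq_right h, max_eq_left h]] <;>
    by_cases h1 : s < x <;> by_cases h2 : s < y <;> by_cases h3 : t < x <;>
      by_cases h4 : t < y <;>
    simp only [← not_lt, h1, h2, h3, h4, not_true_eq_false, not_false_eq_true, true_and,
      and_true, false_and, and_false, and_self, if_true, if_false] <;>
    first
      | rfl
      | (exfalso; linarith)
      | simp

lemma measurable_half (s t : ℝ) (f g : ℝ × ℝ → ℝ) (hf : Measurable f) (hg : Measurable g) :
    MeasurableSet {z : ℝ × ℝ | s < f z ∧ t < g z} :=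
  (measurableSet_lt measurable_const hf).inter (measurableSet_lt measurable_const hg)

lemma mset_identity (γ : Measure (ℝ × ℝ)) (s t : ℝ) :
    γ (mset s t) + (γ {z | s < z.1 ∧ t < z.2} + γ {z | s < z.2 ∧ t < z.1})
      = γ {z | s < z.1 ∧ t < z.1} + γ {z | s < z.2 ∧ t < z.2} := by
  have m1 := measurable_mset s t
  have m2 := measurable_half s t Prod.fst Prod.snd measurable_fst measurable_snd
  have m3 := measurable_half s t Prod.snd Prod.fst measurable_snd measurable_fst
  have m4 := measurable_half s t Prod.fst Prod.fst measurable_fst measurable_fst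
  have m5 := measurable_half s t Prod.snd Prod.snd measurable_snd measurable_snd
  rw [← lintegral_indicator_one m1, ← lintegral_indicator_one m2, ← lintegral_indicator_one m3,
    ← lintegral_indicator_one m4, ← lintegral_indicator_one m5]
  rw [← lintegral_add_left (measurable_one.indicator m2), ← lintegral_add_left
    (measurable_one.indicator m1), ← lintegral_add_left (measurable_one.indicator m4)]
  refine lintegral_congr fun z => ?_
  simp only [Set.indicator_apply, mset, mem_setOf_eq, Pi.one_apply]
  exact pointwise_id z.1 z.2 s t

lemma lintegral_sq_eq (γ : Measure (ℝ × ℝ)) [IsProbabilityMeasure γ] :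
    ∫⁻ z, ENNReal.ofReal ((z.1 - z.2) ^ 2) ∂γ = ∫⁻ s, ∫⁻ t, γ (mset s t) := by
  have hinner : ∀ (z : ℝ × ℝ) (s : ℝ), ∫⁻ t, aI z s * aI z t
      = aI z s * ENNReal.ofReal |z.1 - z.2| := by
    intro z s
    rw [lintegral_const_mul' _ _ (by unfold aI; split <;> simp), aI_lintegral]
  have hz : ∀ z : ℝ × ℝ, ENNReal.ofReal ((z.1 - z.2) ^ 2)
      = ∫⁻ s, aI z s * ENNReal.ofReal |z.1 - z.2| := by
    intro z
    rw [lintegral_mul_const' _ _ ENNReal.ofReal_ne_top, aI_lintegral,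
      ← ENNReal.ofReal_mul (abs_nonneg _), abs_mul_abs_self, ← sq]
  calc ∫⁻ z, ENNReal.ofReal ((z.1 - z.2) ^ 2) ∂γ
      = ∫⁻ z, (∫⁻ s, aI z s * ENNReal.ofReal |z.1 - z.2|) ∂γ := lintegral_congr hz
    _ = ∫⁻ s, (∫⁻ z, aI z s * ENNReal.ofReal |z.1 - z.2| ∂γ) := by
        refine lintegral_lintegral_swap ?_
        exact (measurable_aI.mul (((measurable_fst.comp measurable_fst).sub
          (measurable_snd.comp measurable_fst)).abs.ennreal_ofReal)).aemeasurable
    _ = ∫⁻ s, ∫⁻ t, γ (mset s t) := by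
        refine lintegral_congr fun s => ?_
        calc ∫⁻ z, aI z s * ENNReal.ofReal |z.1 - z.2| ∂γ
            = ∫⁻ z, (∫⁻ t, aI z s * aI z t) ∂γ := by
              refine lintegral_congr fun z => (hinner z s).symm
          _ = ∫⁻ t, (∫⁻ z, aI z s * aI z t ∂γ) := by
              refine lintegral_lintegral_swap ?_
              refine Measurable.aemeasurable ?_
              exact ((measurable_aI.comp (measurable_fst.prodMk measurable_const)).mul
                measurable_aI)
          _ = ∫⁻ t, γ (mset s t) := by
              refine lintegral_congr fun t => ?_
              simp_rw [aI_mul_eq_indicator s t]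
              exact lintegral_indicator_one (measurable_mset s t)

lemma unif01_def : unif01 = volume.restrict (Set.Ioo 0 1) := rfl

lemma inter_upper (f g : ℝ → ℝ) (hf : MonotoneOn f (Ioo 0 1)) (hg : MonotoneOn g (Ioo 0 1))
    (s t : ℝ) :
    volume ({u | s < f u} ∩ {u | t < g u} ∩ Ioo 0 1)
      = min (volume ({u | s < f u} ∩ Ioo 0 1)) (volume ({u | t < g u} ∩ Ioo 0 1)) := by
  set A := {u | s < f u} ∩ Ioo 0 1 with hA
  set B := {u | t < g u} ∩ Ioo 0 1 with hB
  have hAB : {u | s < f u} ∩ {u | t < g u} ∩ Ioo 0 1 = A ∩ B := by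
    rw [hA, hB]; ext u; simp [mem_inter_iff, mem_setOf_eq]; tauto
  rw [hAB]
  rcases em (A ⊆ B) with hsub | hsub
  · rw [inter_eq_left.2 hsub]
    exact (min_eq_left (measure_mono hsub)).symm
  · obtain ⟨a, haA, haB⟩ := not_subset.1 hsub
    have hBA : B ⊆ A := by
      intro b hbB
      have hbI : b ∈ Ioo (0:ℝ) 1 := hbB.2
      have haI : a ∈ Ioo (0:ℝ) 1 := haA.2
      rcases le_total b a with hba | hab
      · exfalso
        exact haB ⟨lt_of_lt_of_le hbB.1 (hg hbI haI hba), haI⟩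
      · exact ⟨lt_of_lt_of_le haA.1 (hf haI hbI hab), hbI⟩
    rw [inter_eq_right.2 hBA]
    exact (min_eq_right (measure_mono hBA)).symm

lemma unif01_upper (f : ℝ → ℝ) (hf : AEMeasurable f unif01) (P : Measure ℝ)
    (h : unif01.map f = P) (s : ℝ) :
    volume ({u | s < f u} ∩ Ioo 0 1) = P (Ioi s) := by
  rw [← h, Measure.map_apply_of_aemeasurable hf measurableSet_Ioi]
  rw [unif01_def, Measure.restrict_apply' measurableSet_Ioo]
  rfl

lemma coupling_marginal_fst (γ : Measure (ℝ × ℝ)) (P : Measure ℝ) (hγ1 : γ.map Prod.fst = P)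
    (r : ℝ) : γ {z | r < z.1} = P (Ioi r) := by
  rw [← hγ1, Measure.map_apply measurable_fst measurableSet_Ioi]
  rfl

lemma coupling_marginal_snd (γ : Measure (ℝ × ℝ)) (Q : Measure ℝ) (hγ2 : γ.map Prod.snd = Q)
    (r : ℝ) : γ {z | r < z.2} = Q (Ioi r) := by
  rw [← hγ2, Measure.map_apply measurable_snd measurableSet_Ioi]
  rfl

lemma coupling_isProb (γ : Measure (ℝ × ℝ)) (P : Measure ℝ) [IsProbabilityMeasure P]
    (hγ1 : γ.map Prod.fst = P) : IsProbabilityMeasure γ := by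
  constructor
  have h := Measure.map_apply (μ := γ) measurable_fst MeasurableSet.univ
  rw [hγ1, Set.preimage_univ, measure_univ] at h
  exact h.symm

/-- Key comparison: the comonotone coupling has the smallest quadratic cost. -/
lemma comonotone_min (P Q : Measure ℝ) [IsProbabilityMeasure P] [IsProbabilityMeasure Q]
    (γ : Measure (ℝ × ℝ)) (hγ1 : γ.map Prod.fst = P) (hγ2 : γ.map Prod.snd = Q)
    (q1 q2 : ℝ → ℝ) (hq1m : MonotoneOn q1 (Ioo 0 1)) (hq2m : MonotoneOn q2 (Ioo 0 1))
    (h1 : unif01.map q1 = P) (h2 : unif01.map q2 = Q) :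
    ∫⁻ z, ENNReal.ofReal ((z.1 - z.2) ^ 2) ∂(unif01.map (fun u => (q1 u, q2 u)))
      ≤ ∫⁻ z, ENNReal.ofReal ((z.1 - z.2) ^ 2) ∂γ := by
  have hq1 : AEMeasurable q1 unif01 :=
    aemeasurable_restrict_of_monotoneOn measurableSet_Ioo hq1m
  have hq2 : AEMeasurable q2 unif01 :=
    aemeasurable_restrict_of_monotoneOn measurableSet_Ioo hq2m
  have hpair : AEMeasurable (fun u => (q1 u, q2 u)) unif01 := hq1.prodMk hq2
  set γ₀ := unif01.map (fun u => (q1 u, q2 u)) with hγ₀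
  have hγ₀prob : IsProbabilityMeasure γ₀ := Measure.isProbabilityMeasure_map hpair
  have hγprob : IsProbabilityMeasure γ := coupling_isProb γ P hγ1
  have hγ₀1 : γ₀.map Prod.fst = P := by
    rw [hγ₀, AEMeasurable.map_map_of_aemeasurable measurable_fst.aemeasurable hpair]
    simpa [Function.comp_def] using h1
  have hγ₀2 : γ₀.map Prod.snd = Q := by
    rw [hγ₀, AEMeasurable.map_map_of_aemeasurable measurable_snd.aemeasurable hpair]
    simpa [Function.comp_def] using h2
  rw [lintegral_sq_eq γ, lintegral_sq_eq γ₀]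
  refine lintegral_mono fun s => lintegral_mono fun t => ?_
  -- pointwise comparison of mset measures
  have hI := mset_identity γ s t
  have hI₀ := mset_identity γ₀ s t
  -- diagonal terms agree
  have hd1 : γ {z | s < z.1 ∧ t < z.1} = γ₀ {z | s < z.1 ∧ t < z.1} := by
    have e : {z : ℝ × ℝ | s < z.1 ∧ t < z.1} = {z : ℝ × ℝ | max s t < z.1} := by
      ext z; simp [max_lt_iff]
    rw [e, coupling_marginal_fst γ P hγ1, coupling_marginal_fst γ₀ P hγ₀1]
  have hd2 : γ {z | s < z.2 ∧ t < z.2} = γ₀ {z | s < z.2 ∧ t < z.2} := by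
    have e : {z : ℝ × ℝ | s < z.2 ∧ t < z.2} = {z : ℝ × ℝ | max s t < z.2} := by
      ext z; simp [max_lt_iff]
    rw [e, coupling_marginal_snd γ Q hγ2, coupling_marginal_snd γ₀ Q hγ₀2]
  -- cross terms: γ₀ achieves the min
  have hc1₀ : γ₀ {z | s < z.1 ∧ t < z.2} = min (P (Ioi s)) (Q (Ioi t)) := by
    rw [hγ₀, Measure.map_apply_of_aemeasurable hpair
      (measurable_half s t Prod.fst Prod.snd measurable_fst measurable_snd)]
    have e : (fun u => (q1 u, q2 u)) ⁻¹' {z | s < z.1 ∧ t < z.2}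
        = {u | s < q1 u} ∩ {u | t < q2 u} := rfl
    rw [e, unif01_def, Measure.restrict_apply' measurableSet_Ioo,
      inter_upper q1 q2 hq1m hq2m s t, unif01_upper q1 hq1 P h1 s, unif01_upper q2 hq2 Q h2 t]
  have hc2₀ : γ₀ {z | s < z.2 ∧ t < z.1} = min (Q (Ioi s)) (P (Ioi t)) := by
    rw [hγ₀, Measure.map_apply_of_aemeasurable hpair
      (measurable_half s t Prod.snd Prod.fst measurable_snd measurable_fst)]
    have e : (fun u => (q1 u, q2 u)) ⁻¹' {z | s < z.2 ∧ t < z.1}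
        = {u | s < q2 u} ∩ {u | t < q1 u} := rfl
    rw [e, unif01_def, Measure.restrict_apply' measurableSet_Ioo,
      inter_upper q2 q1 hq2m hq1m s t, unif01_upper q2 hq2 Q h2 s, unif01_upper q1 hq1 P h1 t]
  have hc1 : γ {z | s < z.1 ∧ t < z.2} ≤ γ₀ {z | s < z.1 ∧ t < z.2} := by
    rw [hc1₀, le_min_iff]
    constructor
    · rw [← coupling_marginal_fst γ P hγ1 s]
      exact measure_mono fun z hz => hz.1
    · rw [← coupling_marginal_snd γ Q hγ2 t]
      exact measure_mono fun z hz => hz.2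
  have hc2 : γ {z | s < z.2 ∧ t < z.1} ≤ γ₀ {z | s < z.2 ∧ t < z.1} := by
    rw [hc2₀, le_min_iff]
    constructor
    · rw [← coupling_marginal_snd γ Q hγ2 s]
      exact measure_mono fun z hz => hz.1
    · rw [← coupling_marginal_fst γ P hγ1 t]
      exact measure_mono fun z hz => hz.2
  -- cancellation
  have hfin : γ₀ {z | s < z.1 ∧ t < z.2} + γ₀ {z | s < z.2 ∧ t < z.1} ≠ ⊤ :=
    (ENNReal.add_lt_top.2 ⟨measure_lt_top _ _, measure_lt_top _ _⟩).ne
  have key : γ₀ (mset s t) + (γ₀ {z | s < z.1 ∧ t < z.2} + γ₀ {z | s < z.2 ∧ t < z.1})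
      ≤ γ (mset s t) + (γ₀ {z | s < z.1 ∧ t < z.2} + γ₀ {z | s < z.2 ∧ t < z.1}) := by
    rw [hI₀, ← hd1, ← hd2, ← hI]
    exact add_le_add_right (add_le_add hc1 hc2) _
  exact (ENNReal.add_le_add_iff_right hfin).1 key

lemma sq_meas {γ' : Measure (ℝ × ℝ)} : AEStronglyMeasurable (fun z : ℝ × ℝ => (z.1 - z.2) ^ 2) γ' :=
  (((measurable_fst.sub measurable_snd).pow_const 2)).aestronglyMeasurable

lemma W2sq_bddBelow (P Q : Measure ℝ) :
    BddBelow { c : ℝ | ∃ γ : Measure (ℝ × ℝ),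
      γ.map Prod.fst = P ∧ γ.map Prod.snd = Q ∧ c = ∫ z, (z.1 - z.2) ^ 2 ∂γ } := by
  refine ⟨0, fun c hc => ?_⟩
  obtain ⟨γ, -, -, rfl⟩ := hc
  exact integral_nonneg fun z => sq_nonneg _

/-- membership of the quantile-type coupling in the coupling set, with its cost. -/
lemma coupling_mem (P Q : Measure ℝ) (f g : ℝ → ℝ)
    (hf : AEMeasurable f unif01) (hg : AEMeasurable g unif01)
    (hfP : unif01.map f = P) (hgQ : unif01.map g = Q) :
    ∫ u, (f u - g u) ^ 2 ∂unif01 ∈ { c : ℝ | ∃ γ : Measure (ℝ × ℝ),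
      γ.map Prod.fst = P ∧ γ.map Prod.snd = Q ∧ c = ∫ z, (z.1 - z.2) ^ 2 ∂γ } := by
  have hpair : AEMeasurable (fun u => (f u, g u)) unif01 := hf.prodMk hg
  refine ⟨unif01.map (fun u => (f u, g u)), ?_, ?_, ?_⟩
  · rw [AEMeasurable.map_map_of_aemeasurable measurable_fst.aemeasurable hpair]
    simpa [Function.comp_def] using hfP
  · rw [AEMeasurable.map_map_of_aemeasurable measurable_snd.aemeasurable hpair]
    simpa [Function.comp_def] using hgQ
  · rw [integral_map hpair sq_meas]

lemma W2sq_le_quantile_cost (P Q : Measure ℝ) (f g : ℝ → ℝ)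
    (hf : AEMeasurable f unif01) (hg : AEMeasurable g unif01)
    (hfP : unif01.map f = P) (hgQ : unif01.map g = Q) :
    W2sq P Q ≤ ∫ u, (f u - g u) ^ 2 ∂unif01 :=
  csInf_le (W2sq_bddBelow P Q) (coupling_mem P Q f g hf hg hfP hgQ)

lemma coupling_memℒp (P Q : Measure ℝ) (hP2 : MemLp id 2 P) (hQ2 : MemLp id 2 Q)
    (γ : Measure (ℝ × ℝ)) (hγ1 : γ.map Prod.fst = P) (hγ2 : γ.map Prod.snd = Q) :
    Integrable (fun z : ℝ × ℝ => (z.1 - z.2) ^ 2) γ := by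
  have h1 : MemLp (fun z : ℝ × ℝ => z.1) 2 γ := by
    rw [← hγ1] at hP2
    exact (memLp_map_measure_iff aestronglyMeasurable_id measurable_fst.aemeasurable).1 hP2
  have h2 : MemLp (fun z : ℝ × ℝ => z.2) 2 γ := by
    rw [← hγ2] at hQ2
    exact (memLp_map_measure_iff aestronglyMeasurable_id measurable_snd.aemeasurable).1 hQ2
  exact (h1.sub h2).integrable_sq

lemma quantile_memℒp (P : Measure ℝ) (q : ℝ → ℝ) (hq : AEMeasurable q unif01)
    (hqP : unif01.map q = P) (hP2 : MemLp id 2 P) : MemLp q 2 unif01 := by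
  rw [← hqP] at hP2
  exact (memLp_map_measure_iff aestronglyMeasurable_id hq).1 hP2

/-- Lower bound: any coupling cost is at least the quantile coupling cost. -/
lemma quantile_cost_le_W2sq (P Q : Measure ℝ) [IsProbabilityMeasure P] [IsProbabilityMeasure Q]
    (hP2 : MemLp id 2 P) (hQ2 : MemLp id 2 Q)
    (q1 q2 : ℝ → ℝ) (hq1m : MonotoneOn q1 (Ioo 0 1)) (hq2m : MonotoneOn q2 (Ioo 0 1))
    (h1 : unif01.map q1 = P) (h2 : unif01.map q2 = Q) :
    ∫ u, (q1 u - q2 u) ^ 2 ∂unif01 ≤ W2sq P Q := by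
  have hq1 : AEMeasurable q1 unif01 :=
    aemeasurable_restrict_of_monotoneOn measurableSet_Ioo hq1m
  have hq2 : AEMeasurable q2 unif01 :=
    aemeasurable_restrict_of_monotoneOn measurableSet_Ioo hq2m
  have hpair : AEMeasurable (fun u => (q1 u, q2 u)) unif01 := hq1.prodMk hq2
  refine le_csInf ⟨_, coupling_mem P Q q1 q2 hq1 hq2 h1 h2⟩ ?_
  rintro c ⟨γ, hγ1, hγ2, rfl⟩
  haveI : IsProbabilityMeasure γ := coupling_isProb γ P hγ1
  have hint : Integrable (fun z : ℝ × ℝ => (z.1 - z.2) ^ 2) γ :=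
    coupling_memℒp P Q hP2 hQ2 γ hγ1 hγ2
  have hfin : ∫⁻ z, ENNReal.ofReal ((z.1 - z.2) ^ 2) ∂γ ≠ ⊤ := hint.lintegral_lt_top.ne
  have hkey := comonotone_min P Q γ hγ1 hγ2 q1 q2 hq1m hq2m h1 h2
  have hγ₀eq : ∫⁻ z, ENNReal.ofReal ((z.1 - z.2) ^ 2) ∂(unif01.map (fun u => (q1 u, q2 u)))
      = ∫⁻ u, ENNReal.ofReal ((q1 u - q2 u) ^ 2) ∂unif01 :=
    lintegral_map' (((measurable_fst.sub measurable_snd).pow_const 2).ennreal_ofReal).aemeasurable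
      hpair
  have e1 : ∫ u, (q1 u - q2 u) ^ 2 ∂unif01
      = (∫⁻ u, ENNReal.ofReal ((q1 u - q2 u) ^ 2) ∂unif01).toReal := by
    rw [integral_eq_lintegral_of_nonneg_ae (f := fun u => (q1 u - q2 u) ^ 2)
      (Filter.Eventually.of_forall fun u => sq_nonneg _)
      (((hq1.sub hq2).pow_const 2).aestronglyMeasurable)]
  have e2 : ∫ z, (z.1 - z.2) ^ 2 ∂γ
      = (∫⁻ z, ENNReal.ofReal ((z.1 - z.2) ^ 2) ∂γ).toReal := by
    rw [integral_eq_lintegral_of_nonneg_ae (Filter.Eventually.of_forall fun z => sq_nonneg _)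
      sq_meas]
  rw [e1, e2]
  exact ENNReal.toReal_mono hfin (hγ₀eq ▸ hkey)

lemma weighted_variance_ineq {k : ℕ} (π : Fin k → ℝ) (hπsum : ∑ s, π s = 1)
    (a : Fin k → ℝ) (t : ℝ) :
    ∑ s, π s * (a s - ∑ j, π j * a j) ^ 2 ≤ ∑ s, π s * (a s - t) ^ 2 := by
  set m := ∑ j, π j * a j with hm
  have h0 : ∑ s, π s * (a s - m) = 0 := by
    simp_rw [mul_sub]
    rw [Finset.sum_sub_distrib, ← Finset.sum_mul, hπsum, one_mul, ← hm, sub_self]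
  have key : ∑ s, π s * (a s - t) ^ 2
      = (∑ s, π s * (a s - m) ^ 2) + (2 * (m - t)) * (∑ s, π s * (a s - m))
        + (∑ s, π s) * (m - t) ^ 2 := by
    rw [Finset.mul_sum, Finset.sum_mul, ← Finset.sum_add_distrib, ← Finset.sum_add_distrib]
    refine Finset.sum_congr rfl fun s _ => ?_
    ring
  rw [key, h0, hπsum, mul_zero, add_zero, one_mul]
  exact le_add_of_nonneg_right (sq_nonneg _)

/-- **Quantile-average construction of the Wasserstein barycenter.** The pushforward `ν̄`
of `Unif(0,1)` under `u ↦ Σ_s π_s F_{μ_s}⁻¹(u)` minimizes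
`ν ↦ Σ_s π_s W₂²(μ_s, ν)` over probability measures `ν` with finite second moment. -/
theorem quantile_average_is_barycenter
    (k : ℕ) (hk : 0 < k)
    (μ : Fin k → Measure ℝ) (hμ : ∀ s, IsProbabilityMeasure (μ s))
    (hμ2 : ∀ s, MemLp id 2 (μ s))
    (π : Fin k → ℝ) (hπpos : ∀ s, 0 < π s) (hπsum : ∑ s, π s = 1)
    (νbar : Measure ℝ)
    (hνbar : νbar = unif01.map (fun u => ∑ s, π s * quantile' (μ s) u)) :
    ∀ ν : Measure ℝ, IsProbabilityMeasure ν → MemLp id 2 ν →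
      ∑ s, π s * W2sq (μ s) νbar ≤ ∑ s, π s * W2sq (μ s) ν := by
  intro ν hν hν2
  haveI := hν
  haveI := fun s => hμ s
  set q : Fin k → ℝ → ℝ := fun s => quantile' (μ s) with hq
  set qbar : ℝ → ℝ := fun u => ∑ s, π s * q s u with hqbar
  set qν : ℝ → ℝ := quantile' ν with hqν
  -- monotonicity
  have hqm : ∀ s, MonotoneOn (q s) (Ioo 0 1) := fun s => quantile_monotoneOn (μ s)
  have hqbarm : MonotoneOn qbar (Ioo 0 1) := by
    intro u hu v hv huv
    exact Finset.sum_le_sum fun s _ =>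
      mul_le_mul_of_nonneg_left (hqm s hu hv huv) (hπpos s).le
  have hqνm : MonotoneOn qν (Ioo 0 1) := quantile_monotoneOn ν
  -- ae-measurability
  have hqae : ∀ s, AEMeasurable (q s) unif01 := fun s =>
    aemeasurable_restrict_of_monotoneOn measurableSet_Ioo (hqm s)
  have hqbarae : AEMeasurable qbar unif01 :=
    aemeasurable_restrict_of_monotoneOn measurableSet_Ioo hqbarm
  have hqνae : AEMeasurable qν unif01 :=
    aemeasurable_restrict_of_monotoneOn measurableSet_Ioo hqνm
  -- pushforwards
  have hqmap : ∀ s, unif01.map (q s) = μ s := fun s => unif01_map_quantile (μ s)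
  have hqνmap : unif01.map qν = ν := unif01_map_quantile ν
  have hqbarmap : unif01.map qbar = νbar := hνbar.symm
  -- ℒ² facts
  have hq2 : ∀ s, MemLp (q s) 2 unif01 := fun s =>
    quantile_memℒp (μ s) (q s) (hqae s) (hqmap s) (hμ2 s)
  have hqν2 : MemLp qν 2 unif01 := quantile_memℒp ν qν hqνae hqνmap hν2
  have hqbar2 : MemLp qbar 2 unif01 := by
    have := memLp_finset_sum (μ := unif01) (f := fun s u => π s * q s u) Finset.univ
      (fun s _ => ((hq2 s).const_mul (π s)))
    simpa [hqbar] using this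
  -- integrability of squared differences
  have hint1 : ∀ s, Integrable (fun u => (q s u - qbar u) ^ 2) unif01 := fun s =>
    ((hq2 s).sub hqbar2).integrable_sq
  have hint2 : ∀ s, Integrable (fun u => (q s u - qν u) ^ 2) unif01 := fun s =>
    ((hq2 s).sub hqν2).integrable_sq
  -- upper bounds for νbar, lower bounds for ν
  have ub : ∀ s, W2sq (μ s) νbar ≤ ∫ u, (q s u - qbar u) ^ 2 ∂unif01 := fun s =>
    W2sq_le_quantile_cost (μ s) νbar (q s) qbar (hqae s) hqbarae (hqmap s) hqbarmap
  have lb : ∀ s, ∫ u, (q s u - qν u) ^ 2 ∂unif01 ≤ W2sq (μ s) ν := fun s =>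
    quantile_cost_le_W2sq (μ s) ν (hμ2 s) hν2 (q s) qν (hqm s) hqνm (hqmap s) hqνmap
  -- compare the two integrals
  have hmid : ∑ s, π s * ∫ u, (q s u - qbar u) ^ 2 ∂unif01
      ≤ ∑ s, π s * ∫ u, (q s u - qν u) ^ 2 ∂unif01 := by
    have e1 : ∑ s, π s * ∫ u, (q s u - qbar u) ^ 2 ∂unif01
        = ∫ u, ∑ s, π s * (q s u - qbar u) ^ 2 ∂unif01 := by
      rw [integral_finset_sum _ (fun s _ => (hint1 s).const_mul (π s))]
      exact Finset.sum_congr rfl fun s _ => (integral_const_mul (π s) _).symm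
    have e2 : ∑ s, π s * ∫ u, (q s u - qν u) ^ 2 ∂unif01
        = ∫ u, ∑ s, π s * (q s u - qν u) ^ 2 ∂unif01 := by
      rw [integral_finset_sum _ (fun s _ => (hint2 s).const_mul (π s))]
      exact Finset.sum_congr rfl fun s _ => (integral_const_mul (π s) _).symm
    rw [e1, e2]
    refine integral_mono (by
        exact integrable_finset_sum _ (fun s _ => (hint1 s).const_mul (π s)))
      (by exact integrable_finset_sum _ (fun s _ => (hint2 s).const_mul (π s)))
      (fun u => ?_)
    exact weighted_variance_ineq π hπsum (fun s => q s u) (qν u)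
  calc ∑ s, π s * W2sq (μ s) νbar
      ≤ ∑ s, π s * ∫ u, (q s u - qbar u) ^ 2 ∂unif01 :=
        Finset.sum_le_sum fun s _ => mul_le_mul_of_nonneg_left (ub s) (hπpos s).le
    _ ≤ ∑ s, π s * ∫ u, (q s u - qν u) ^ 2 ∂unif01 := hmid
    _ ≤ ∑ s, π s * W2sq (μ s) ν :=
        Finset.sum_le_sum fun s _ => mul_le_mul_of_nonneg_left (lb s) (hπpos s).le
end

section
/- Assume that μ_s is absolutely continuous with respect to Lebesgue measure for every s ∈ {1,…,k}, and define the regressor g*(x,s) := Σ_{t=1}^k π_t F_{μ_t}⁻¹(F_{μ_s}(η_s(x))). Then for every s ∈ {1,…,k}, the conditional distribution of g*(X,S) given S = s equals ν̄, the pushforward of Unif(0,1) under u ↦ Σ_{t=1}^k π_t F_{μ_t}⁻¹(u); in particular g*(X,S) is independent of S, i.e., g* satisfies demographic parity. (First part of Theorem 2.) -/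
open MeasureTheory ProbabilityTheory

open Set Filter Topology

lemma cdf'_mono (μ : Measure ℝ) [IsFiniteMeasure μ] : Monotone (cdf' μ) := fun a b hab =>
  ENNReal.toReal_mono (measure_ne_top μ _) (measure_mono (Set.Iic_subset_Iic.2 hab))

lemma cdf'_measurable (μ : Measure ℝ) [IsFiniteMeasure μ] : Measurable (cdf' μ) :=
  (cdf'_mono μ).measurable

lemma cdf'_nonneg (μ : Measure ℝ) (x : ℝ) : 0 ≤ cdf' μ x := ENNReal.toReal_nonneg

lemma cdf'_le_one (μ : Measure ℝ) [IsProbabilityMeasure μ] (x : ℝ) : cdf' μ x ≤ 1 := by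
  have h := ENNReal.toReal_mono (a := μ (Set.Iic x)) (b := 1) (by simp) (prob_le_one)
  simpa [cdf'] using h

lemma tendsto_cdf'_atBot (μ : Measure ℝ) [IsProbabilityMeasure μ] :
    Tendsto (cdf' μ) atBot (𝓝 0) := by
  have h : Tendsto (fun x : ℝ => μ (Iic x)) atBot (𝓝 (μ (⋂ x : ℝ, Iic x))) :=
    tendsto_measure_iInter_atBot (fun _ => nullMeasurableSet_Iic)
      (fun a b hab => Iic_subset_Iic.2 hab) ⟨0, measure_ne_top μ _⟩
  have hempty : (⋂ x : ℝ, Iic x) = (∅ : Set ℝ) := by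
    ext y; simp only [mem_iInter, mem_Iic, mem_empty_iff_false, iff_false, not_forall, not_le]
    exact ⟨y - 1, by linarith⟩
  rw [hempty] at h
  show Tendsto (fun x => (μ (Iic x)).toReal) atBot (𝓝 0)
  simpa [Function.comp_def] using (ENNReal.tendsto_toReal (by simp)).comp h

lemma tendsto_cdf'_atTop (μ : Measure ℝ) [IsProbabilityMeasure μ] :
    Tendsto (cdf' μ) atTop (𝓝 1) := by
  have h := tendsto_measure_Iic_atTop (μ := μ)
  rw [measure_univ] at h
  show Tendsto (fun x => (μ (Iic x)).toReal) atTop (𝓝 1)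
  simpa [Function.comp_def] using (ENNReal.tendsto_toReal (by simp)).comp h

lemma pit (μ : Measure ℝ) [IsProbabilityMeasure μ] (h0 : ∀ x : ℝ, μ {x} = 0) :
    μ.map (cdf' μ) = unif01 := by
  have hmeas := cdf'_measurable μ
  have hprob : IsProbabilityMeasure (μ.map (cdf' μ)) :=
    Measure.isProbabilityMeasure_map hmeas.aemeasurable
  refine Measure.ext_of_Iic _ _ (fun u => ?_)
  rw [Measure.map_apply hmeas measurableSet_Iic]
  have hpre : cdf' μ ⁻¹' Iic u = {x | cdf' μ x ≤ u} := rfl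
  rw [hpre]
  rcases lt_or_ge u 0 with hu | hu
  · have h1 : {x | cdf' μ x ≤ u} = (∅ : Set ℝ) := by
      ext x; simp only [mem_setOf_eq, mem_empty_iff_false, iff_false, not_le]
      exact lt_of_lt_of_le hu (cdf'_nonneg μ x)
    have h2 : Iic u ∩ Ioo (0:ℝ) 1 = ∅ := by
      ext x; simp only [mem_inter_iff, mem_Iic, mem_Ioo, mem_empty_iff_false, iff_false]
      rintro ⟨hx, hx0, _⟩; linarith
    simp [h1, unif01, Measure.restrict_apply measurableSet_Iic, h2]
  rcases le_or_gt 1 u with hu1 | hu1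
  · have h1 : {x | cdf' μ x ≤ u} = (univ : Set ℝ) := by
      ext x; simp only [mem_setOf_eq, mem_univ, iff_true]
      exact le_trans (cdf'_le_one μ x) hu1
    have h2 : Iic u ∩ Ioo (0:ℝ) 1 = Ioo 0 1 := by
      rw [inter_eq_right]; intro x hx; exact le_trans hx.2.le hu1
    simp [h1, unif01, Measure.restrict_apply measurableSet_Iic, h2, Real.volume_Ioo]
  · have hRHS : unif01 (Iic u) = ENNReal.ofReal u := by
      have h2 : Iic u ∩ Ioo (0:ℝ) 1 = Ioc 0 u := by
        ext x; simp only [mem_inter_iff, mem_Iic, mem_Ioo, mem_Ioc]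
        exact ⟨fun ⟨hx, hx0, _⟩ => ⟨hx0, hx⟩, fun ⟨hx0, hx⟩ => ⟨hx, hx0, lt_of_le_of_lt hx hu1⟩⟩
      simp [unif01, Measure.restrict_apply measurableSet_Iic, h2, Real.volume_Ioc]
    rw [hRHS]
    set A := {x | cdf' μ x ≤ u} with hA
    by_cases hne : A.Nonempty
    · obtain ⟨x1, hx1⟩ : ∃ x1, u < cdf' μ x1 :=
        ((tendsto_cdf'_atTop μ).eventually_const_lt hu1).exists
      have hbdd : BddAbove A := by
        refine ⟨x1, fun y hy => ?_⟩
        by_contra hlt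
        push_neg at hlt
        exact absurd (le_trans (cdf'_mono μ hlt.le) hy) (not_le.2 hx1)
      set a := sSup A with ha
      have hIoosub : Iio a ⊆ A := by
        intro x hx
        obtain ⟨y, hyA, hxy⟩ := exists_lt_of_lt_csSup hne hx
        exact le_trans (cdf'_mono μ hxy.le) hyA
      have hsub : A ⊆ Iic a := fun y hy => le_csSup hbdd hy
      have hIioIic : μ (Iio a) = μ (Iic a) := measure_congr (Iio_ae_eq_Iic' (h0 a))
      -- upper bound: μ (Iio a) ≤ ofReal u
      have hupper : μ (Iio a) ≤ ENNReal.ofReal u := by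
        have hmonot : Monotone (fun n : ℕ => Iic (a - 1/(n+1) : ℝ)) := by
          intro n m hnm
          apply Iic_subset_Iic.2
          have h1 : (1:ℝ)/(m+1) ≤ 1/(n+1) := by
            apply one_div_le_one_div_of_le <;> [positivity; exact_mod_cast by omega]
          linarith
        have hUeq : (⋃ n : ℕ, Iic (a - 1/(n+1) : ℝ)) = Iio a := by
          ext x
          simp only [mem_iUnion, mem_Iic, mem_Iio]
          constructor
          · rintro ⟨n, hn⟩
            have : (0:ℝ) < 1/(n+1) := by positivity
            linarith
          · intro hx
            obtain ⟨n, hn⟩ := exists_nat_one_div_lt (sub_pos.2 hx)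
            exact ⟨n, by linarith⟩
        have ht : Tendsto (fun n : ℕ => μ (Iic (a - 1/(n+1) : ℝ))) atTop (𝓝 (μ (Iio a))) := by
          have := tendsto_measure_iUnion_atTop (μ := μ) hmonot
          rwa [hUeq] at this
        refine le_of_tendsto ht (Eventually.of_forall fun n => ?_)
        have hlt : a - 1/(n+1) < a := by
          have : (0:ℝ) < 1/(n+1) := by positivity
          linarith
        obtain ⟨y, hyA, hxy⟩ := exists_lt_of_lt_csSup hne hlt
        calc μ (Iic (a - 1/(n+1) : ℝ)) ≤ μ (Iic y) := measure_mono (Iic_subset_Iic.2 hxy.le)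
          _ ≤ ENNReal.ofReal u :=
            (ENNReal.le_ofReal_iff_toReal_le (measure_ne_top μ _) hu).2 hyA
      -- lower bound: ofReal u ≤ μ (Iic a)
      have hlower : ENNReal.ofReal u ≤ μ (Iic a) := by
        have hantit : Antitone (fun n : ℕ => Iic (a + 1/(n+1) : ℝ)) := by
          intro n m hnm
          apply Iic_subset_Iic.2
          have h1 : (1:ℝ)/(m+1) ≤ 1/(n+1) := by
            apply one_div_le_one_div_of_le <;> [positivity; exact_mod_cast by omega]
          linarith
        have hIeq : (⋂ n : ℕ, Iic (a + 1/(n+1) : ℝ)) = Iic a := by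
          ext x
          simp only [mem_iInter, mem_Iic]
          constructor
          · intro hx
            by_contra hxa
            push_neg at hxa
            obtain ⟨n, hn⟩ := exists_nat_one_div_lt (sub_pos.2 hxa)
            have := hx n
            linarith
          · intro hx n
            have : (0:ℝ) < 1/(n+1) := by positivity
            linarith
        have ht : Tendsto (fun n : ℕ => μ (Iic (a + 1/(n+1) : ℝ))) atTop (𝓝 (μ (Iic a))) := by
          have := tendsto_measure_iInter_atTop (μ := μ)
            (fun n => nullMeasurableSet_Iic) hantit ⟨0, measure_ne_top μ _⟩
          rwa [hIeq] at this
        refine ge_of_tendsto ht (Eventually.of_forall fun n => ?_)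
        have hnotA : (a + 1/(n+1) : ℝ) ∉ A := by
          intro hmem
          have h1 := le_csSup hbdd hmem
          have : (0:ℝ) < 1/(n+1) := by positivity
          linarith
        have hgt : u < cdf' μ (a + 1/(n+1) : ℝ) := by
          by_contra hle
          exact hnotA (not_lt.1 hle)
        exact (ENNReal.ofReal_le_iff_le_toReal (measure_ne_top μ _)).2 hgt.le
      have h1 : μ A ≤ ENNReal.ofReal u :=
        le_trans (measure_mono hsub) (le_trans hIioIic.symm.le hupper)
      have h2 : ENNReal.ofReal u ≤ μ A :=
        le_trans (le_trans hlower hIioIic.symm.le) (measure_mono hIoosub)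
      exact le_antisymm h1 h2
    · have hu0 : u = 0 := by
        by_contra h
        have hupos : 0 < u := lt_of_le_of_ne hu (Ne.symm h)
        obtain ⟨x, hx⟩ := ((tendsto_cdf'_atBot μ).eventually_lt_const hupos).exists
        exact hne ⟨x, hx.le⟩
      have hAe : A = ∅ := not_nonempty_iff_eq_empty.1 hne
      simp [hAe, hu0]

lemma quantile'_monotoneOn (μ : Measure ℝ) [IsProbabilityMeasure μ] :
    MonotoneOn (quantile' μ) (Ioo 0 1) := by
  intro u hu v hv huv
  apply csInf_le_csInf
  · obtain ⟨x0, hx0⟩ : ∃ x0, cdf' μ x0 < u :=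
      ((tendsto_cdf'_atBot μ).eventually_lt_const hu.1).exists
    refine ⟨x0, fun y hy => ?_⟩
    by_contra hlt
    push_neg at hlt
    exact absurd (le_trans hy (cdf'_mono μ hlt.le)) (not_le.2 hx0)
  · obtain ⟨x, hx⟩ : ∃ x, v < cdf' μ x :=
      ((tendsto_cdf'_atTop μ).eventually_const_lt hv.2).exists
    exact ⟨x, hx.le⟩
  · exact fun x hx => le_trans huv hx
lemma measure_eq_sum_fiber {Ω : Type*} [MeasurableSpace Ω] (Pr : Measure Ω) {k : ℕ}
    {S : Ω → Fin k} (hS : Measurable S) {t : Set Ω} (ht : NullMeasurableSet t Pr) :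
    Pr t = ∑ s : Fin k, Pr (t ∩ S ⁻¹' {s}) := by
  have hUn : t = ⋃ s : Fin k, t ∩ S ⁻¹' {s} := by ext ω; simp
  have hmeas : ∀ s : Fin k, NullMeasurableSet (t ∩ S ⁻¹' {s}) Pr :=
    fun s => ht.inter (hS (measurableSet_singleton s)).nullMeasurableSet
  have hdisj : Pairwise (Function.onFun (AEDisjoint Pr) fun s : Fin k => t ∩ S ⁻¹' {s}) := by
    intro i j hij
    refine Disjoint.aedisjoint (Set.disjoint_left.2 fun ω hωi hωj => hij ?_)
    have h1 : S ω = i := hωi.2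
    have h2 : S ω = j := hωj.2
    rw [← h1, h2]
  calc Pr t = Pr (⋃ s : Fin k, t ∩ S ⁻¹' {s}) := by rw [← hUn]
    _ = ∑' s : Fin k, Pr (t ∩ S ⁻¹' {s}) := measure_iUnion₀ hdisj hmeas
    _ = ∑ s : Fin k, Pr (t ∩ S ⁻¹' {s}) := tsum_fintype _


/-- **Theorem 2 (first part).** If every `μ_s` is absolutely continuous, then the
regressor `g*(x,s) = Σ_t π_t F_{μ_t}⁻¹(F_{μ_s}(η_s(x)))` has conditional distribution
given `S = s` equal to the barycenter `ν̄` for every `s`; in particular `g*(X,S)` is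
independent of `S`, i.e. `g*` satisfies demographic parity. -/
theorem projection_to_fairness_is_DP
    {Ω : Type*} [MeasurableSpace Ω] (Pr : Measure Ω) [IsProbabilityMeasure Pr]
    (d k : ℕ) (hk : 0 < k)
    (X : Ω → EuclideanSpace ℝ (Fin d)) (S : Ω → Fin k) (Y : Ω → ℝ)
    (hX : Measurable X) (hS : Measurable S) (hY : Measurable Y)
    (hY2 : MemLp Y 2 Pr)
    (π : Fin k → ℝ) (hπ : ∀ s, π s = (Pr (S ⁻¹' {s})).toReal) (hπpos : ∀ s, 0 < π s)
    -- the Bayes regressor: `η(X,S) = 𝔼[Y | X,S]` a.s.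
    (η : EuclideanSpace ℝ (Fin d) × Fin k → ℝ) (hη : Measurable η)
    (hηBayes : (fun ω => η (X ω, S ω))
      =ᵐ[Pr] MeasureTheory.condExp
        (MeasurableSpace.comap (fun ω => (X ω, S ω)) inferInstance) Pr Y)
    -- conditional distributions of `η(X,S)` given `S = s`, absolutely continuous
    (μ : Fin k → Measure ℝ)
    (hμ : ∀ s, μ s = (Pr[|S ⁻¹' {s}]).map (fun ω => η (X ω, S ω)))
    (hμac : ∀ s, μ s ≪ volume)
    -- the projection to fairness `g*` and the barycenter `ν̄`
    (gstar : EuclideanSpace ℝ (Fin d) × Fin k → ℝ)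
    (hgstar : ∀ x s, gstar (x, s) = ∑ t, π t * quantile' (μ t) (cdf' (μ s) (η (x, s))))
    (νbar : Measure ℝ)
    (hνbar : νbar = unif01.map (fun u => ∑ t, π t * quantile' (μ t) u)) :
    (∀ s, (Pr[|S ⁻¹' {s}]).map (fun ω => gstar (X ω, S ω)) = νbar) ∧
    IndepFun (fun ω => gstar (X ω, S ω)) S Pr := by
  classical
  have hZ : Measurable (fun ω => η (X ω, S ω)) := hη.comp (hX.prodMk hS)
  have hEc : ∀ s : Fin k, MeasurableSet (S ⁻¹' {s}) := fun s => hS (measurableSet_singleton s)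
  have hE0 : ∀ s : Fin k, Pr (S ⁻¹' {s}) ≠ 0 := by
    intro s h
    have h1 := hπpos s
    rw [hπ s, h] at h1
    simp at h1
  have hμprob : ∀ s : Fin k, IsProbabilityMeasure (μ s) := by
    intro s
    haveI : IsProbabilityMeasure (Pr[|S ⁻¹' {s}]) := cond_isProbabilityMeasure (hE0 s)
    rw [hμ s]
    exact Measure.isProbabilityMeasure_map hZ.aemeasurable
  have hGmono : MonotoneOn (fun u => ∑ t, π t * quantile' (μ t) u) (Set.Ioo 0 1) := by
    intro u hu v hv huv
    refine Finset.sum_le_sum fun t _ => ?_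
    haveI := hμprob t
    exact mul_le_mul_of_nonneg_left (quantile'_monotoneOn (μ t) hu hv huv) (hπpos t).le
  have hGae : AEMeasurable (fun u => ∑ t, π t * quantile' (μ t) u) unif01 :=
    aemeasurable_restrict_of_monotoneOn measurableSet_Ioo hGmono
  -- main work, per class s
  have key : ∀ s : Fin k, (Pr[|S ⁻¹' {s}]).map (fun ω => gstar (X ω, S ω)) = νbar ∧
      AEMeasurable (fun ω => gstar (X ω, S ω)) (Pr[|S ⁻¹' {s}]) := by
    intro s
    haveI : IsProbabilityMeasure (Pr[|S ⁻¹' {s}]) := cond_isProbabilityMeasure (hE0 s)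
    haveI := hμprob s
    have h0 : ∀ x : ℝ, μ s {x} = 0 := fun x => (hμac s) (measure_singleton x)
    have hPIT : (μ s).map (cdf' (μ s)) = unif01 := pit (μ s) h0
    have h1 : (Pr[|S ⁻¹' {s}]).map (fun ω => cdf' (μ s) (η (X ω, S ω))) = unif01 := by
      show (Pr[|S ⁻¹' {s}]).map ((cdf' (μ s)) ∘ (fun ω => η (X ω, S ω))) = unif01
      rw [← Measure.map_map (cdf'_measurable (μ s)) hZ, ← hμ s, hPIT]
    have hSae : ∀ᵐ ω ∂(Pr[|S ⁻¹' {s}]), S ω = s := by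
      rw [ae_iff]
      have hsub : {ω | ¬ S ω = s} = (S ⁻¹' {s})ᶜ := by ext ω; simp
      rw [hsub, cond_apply (hEc s)]
      simp
    have hae : (fun ω => gstar (X ω, S ω)) =ᵐ[Pr[|S ⁻¹' {s}]]
        fun ω => (fun u => ∑ t, π t * quantile' (μ t) u) (cdf' (μ s) (η (X ω, S ω))) := by
      filter_upwards [hSae] with ω hω
      rw [hω, hgstar]
    have hGae' : AEMeasurable (fun u => ∑ t, π t * quantile' (μ t) u)
        ((Pr[|S ⁻¹' {s}]).map (fun ω => cdf' (μ s) (η (X ω, S ω)))) := by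
      rw [h1]; exact hGae
    have hcdfZ : Measurable (fun ω => cdf' (μ s) (η (X ω, S ω))) :=
      (cdf'_measurable (μ s)).comp hZ
    have hcomp : AEMeasurable
        (fun ω => (fun u => ∑ t, π t * quantile' (μ t) u) (cdf' (μ s) (η (X ω, S ω))))
        (Pr[|S ⁻¹' {s}]) :=
      hGae'.comp_aemeasurable hcdfZ.aemeasurable
    refine ⟨?_, hcomp.congr hae.symm⟩
    calc (Pr[|S ⁻¹' {s}]).map (fun ω => gstar (X ω, S ω))
        = (Pr[|S ⁻¹' {s}]).map
          ((fun u => ∑ t, π t * quantile' (μ t) u) ∘ (fun ω => cdf' (μ s) (η (X ω, S ω)))) :=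
          Measure.map_congr hae
      _ = ((Pr[|S ⁻¹' {s}]).map (fun ω => cdf' (μ s) (η (X ω, S ω)))).map
          (fun u => ∑ t, π t * quantile' (μ t) u) :=
          (AEMeasurable.map_map_of_aemeasurable hGae' hcdfZ.aemeasurable).symm
      _ = unif01.map (fun u => ∑ t, π t * quantile' (μ t) u) := by rw [h1]
      _ = νbar := hνbar.symm
  refine ⟨fun s => (key s).1, ?_⟩
  -- independence
  have hrest : ∀ s : Fin k,
      AEMeasurable (fun ω => gstar (X ω, S ω)) (Pr.restrict (S ⁻¹' {s})) := by
    intro s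
    have h := (key s).2
    have hco : Pr[|S ⁻¹' {s}] = (Pr (S ⁻¹' {s}))⁻¹ • Pr.restrict (S ⁻¹' {s}) := rfl
    rw [hco] at h
    exact (aemeasurable_smul_measure_iff (ENNReal.inv_ne_zero.2 (measure_ne_top Pr _))).1 h
  have hfPr : AEMeasurable (fun ω => gstar (X ω, S ω)) Pr := by
    have hc : (⋃ s : Fin k, S ⁻¹' {s}) = Set.univ := by ext ω; simp
    have h := (aemeasurable_iUnion_iff (μ := Pr)
      (s := fun s : Fin k => S ⁻¹' {s})).2 hrest
    rwa [hc, Measure.restrict_univ] at h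
  have hfiber : ∀ (A : Set ℝ), MeasurableSet A → ∀ s : Fin k,
      Pr ((fun ω => gstar (X ω, S ω)) ⁻¹' A ∩ S ⁻¹' {s}) = νbar A * Pr (S ⁻¹' {s}) := by
    intro A hA s
    have hfae : AEMeasurable (fun ω => gstar (X ω, S ω)) (Pr[|S ⁻¹' {s}]) := by
      have hco : Pr[|S ⁻¹' {s}] = (Pr (S ⁻¹' {s}))⁻¹ • Pr.restrict (S ⁻¹' {s}) := rfl
      rw [hco]
      exact (aemeasurable_smul_measure_iff
        (ENNReal.inv_ne_zero.2 (measure_ne_top Pr _))).2 (hrest s)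
    have h2 : (Pr[|S ⁻¹' {s}]) ((fun ω => gstar (X ω, S ω)) ⁻¹' A) = νbar A := by
      rw [← Measure.map_apply_of_aemeasurable hfae hA, (key s).1]
    rw [cond_apply (hEc s)] at h2
    have h3 := congrArg (fun x => Pr (S ⁻¹' {s}) * x) h2
    simp only [← mul_assoc, ENNReal.mul_inv_cancel (hE0 s) (measure_ne_top Pr _), one_mul] at h3
    rw [Set.inter_comm] at h3
    rw [h3, mul_comm]
  rw [indepFun_iff_measure_inter_preimage_eq_mul]
  intro A B hA hB
  have hfA : NullMeasurableSet ((fun ω => gstar (X ω, S ω)) ⁻¹' A) Pr :=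
    hfPr.nullMeasurable hA
  have hSB : MeasurableSet (S ⁻¹' B) := hS hB
  have hsum1 : ∑ s : Fin k, Pr (S ⁻¹' {s}) = 1 := by
    have h := measure_eq_sum_fiber Pr hS (t := Set.univ) MeasurableSet.univ.nullMeasurableSet
    simpa [Set.univ_inter] using h.symm
  have hPA : Pr ((fun ω => gstar (X ω, S ω)) ⁻¹' A) = νbar A := by
    rw [measure_eq_sum_fiber Pr hS hfA]
    simp only [hfiber A hA]
    rw [← Finset.mul_sum, hsum1, mul_one]
  have hmain : Pr ((fun ω => gstar (X ω, S ω)) ⁻¹' A ∩ S ⁻¹' B)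
      = νbar A * Pr (S ⁻¹' B) := by
    rw [measure_eq_sum_fiber Pr hS (hfA.inter hSB.nullMeasurableSet),
      measure_eq_sum_fiber Pr hS hSB.nullMeasurableSet, Finset.mul_sum]
    refine Finset.sum_congr rfl fun s _ => ?_
    by_cases hsB : s ∈ B
    · have e1 : (fun ω => gstar (X ω, S ω)) ⁻¹' A ∩ S ⁻¹' B ∩ S ⁻¹' {s}
          = (fun ω => gstar (X ω, S ω)) ⁻¹' A ∩ S ⁻¹' {s} := by
        ext ω
        simp only [Set.mem_inter_iff, Set.mem_preimage, Set.mem_singleton_iff]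
        exact ⟨fun ⟨⟨h1, _⟩, h3⟩ => ⟨h1, h3⟩, fun ⟨h1, h3⟩ => ⟨⟨h1, h3 ▸ hsB⟩, h3⟩⟩
      have e2 : S ⁻¹' B ∩ S ⁻¹' {s} = S ⁻¹' {s} := by
        ext ω
        simp only [Set.mem_inter_iff, Set.mem_preimage, Set.mem_singleton_iff]
        exact ⟨fun ⟨_, h3⟩ => h3, fun h3 => ⟨h3 ▸ hsB, h3⟩⟩
      rw [e1, e2, hfiber A hA s]
    · have e1 : (fun ω => gstar (X ω, S ω)) ⁻¹' A ∩ S ⁻¹' B ∩ S ⁻¹' {s} = ∅ := by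
        ext ω
        simp only [Set.mem_inter_iff, Set.mem_preimage, Set.mem_singleton_iff,
          Set.mem_empty_iff_false, iff_false, not_and]
        exact fun ⟨_, h2⟩ h3 => hsB (h3 ▸ h2)
      have e2 : S ⁻¹' B ∩ S ⁻¹' {s} = ∅ := by
        ext ω
        simp only [Set.mem_inter_iff, Set.mem_preimage, Set.mem_singleton_iff,
          Set.mem_empty_iff_false, iff_false, not_and]
        exact fun h2 h3 => hsB (h3 ▸ h2)
      simp [e1, e2]
  rw [hmain, hPA]
end

section
/- Let (X,S) and (X',S') be random variables on a common probability space with values in ℝ^d × {1,…,k} and 𝔼[|X − X'|²] < ∞. Let η, η̂ : ℝ^d × {1,…,k} → ℝ be measurable functions such that 𝔼[η(X,S)²] < ∞, |η̂(x,s)| ≤ M for all (x,s), and x ↦ η̂(x,s) is L-Lipschitz for every s ∈ {1,…,k}. Then W₂²(law of η(X,S), law of η̂(X',S')) ≤ 2 𝔼[|η(X,S) − η̂(X,S)|²] + 2L² 𝔼[|X − X'|²] + 8M² ℙ(S ≠ S'). (The key perturbation inequality in the proof of Theorem 3.) -/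
open MeasureTheory ProbabilityTheory

/-- **Perturbation inequality** (key step in the proof of Theorem 3). If `η̂` is bounded
by `M` and `L`-Lipschitz in `x` for every `s`, then
`W₂²(law η(X,S), law η̂(X',S')) ≤ 2 𝔼|η(X,S) − η̂(X,S)|² + 2 L² 𝔼|X − X'|² + 8 M² ℙ(S ≠ S')`. -/
theorem wasserstein_perturbation_inequality
    {Ω : Type*} [MeasurableSpace Ω] (Pr : Measure Ω) [IsProbabilityMeasure Pr]
    (d k : ℕ) (hk : 0 < k)
    (X X' : Ω → EuclideanSpace ℝ (Fin d)) (S S' : Ω → Fin k)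
    (hX : Measurable X) (hX' : Measurable X') (hS : Measurable S) (hS' : Measurable S')
    (hXX' : MemLp (fun ω => X ω - X' ω) 2 Pr)
    (η ηhat : EuclideanSpace ℝ (Fin d) × Fin k → ℝ)
    (hη : Measurable η) (hηhat : Measurable ηhat)
    (hη2 : MemLp (fun ω => η (X ω, S ω)) 2 Pr)
    (M : ℝ) (hM : ∀ x s, |ηhat (x, s)| ≤ M)
    (L : ℝ) (hL : 0 ≤ L)
    (hLip : ∀ (s : Fin k) (x x' : EuclideanSpace ℝ (Fin d)),
      |ηhat (x', s) - ηhat (x, s)| ≤ L * ‖x' - x‖) :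
    W2sq (Pr.map (fun ω => η (X ω, S ω))) (Pr.map (fun ω => ηhat (X' ω, S' ω)))
      ≤ 2 * (∫ ω, (η (X ω, S ω) - ηhat (X ω, S ω)) ^ 2 ∂Pr)
        + 2 * L ^ 2 * (∫ ω, ‖X ω - X' ω‖ ^ 2 ∂Pr)
        + 8 * M ^ 2 * (Pr {ω | S ω ≠ S' ω}).toReal := by
  set f : Ω → ℝ := fun ω => η (X ω, S ω) with hf_def
  set g : Ω → ℝ := fun ω => ηhat (X ω, S ω) with hg_def
  set h : Ω → ℝ := fun ω => ηhat (X' ω, S' ω) with hh_def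
  have hf : Measurable f := hη.comp (hX.prodMk hS)
  have hg : Measurable g := hηhat.comp (hX.prodMk hS)
  have hh : Measurable h := hηhat.comp (hX'.prodMk hS')
  have hM0 : 0 ≤ M := le_trans (abs_nonneg _) (hM 0 ⟨0, hk⟩)
  -- the measurable set where S ≠ S'
  have hsmeas : MeasurableSet {ω | S ω ≠ S' ω} := by
    have : MeasurableSet {ω | S ω = S' ω} :=
      measurableSet_eq_fun hS hS'
    exact this.compl
  -- integrabilities
  have hg2 : MemLp g 2 Pr := by
    refine MemLp.of_bound hg.aestronglyMeasurable M (ae_of_all _ fun ω => ?_)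
    simpa [Real.norm_eq_abs] using hM (X ω) (S ω)
  have hfg : Integrable (fun ω => (f ω - g ω) ^ 2) Pr := (hη2.sub hg2).integrable_sq
  have hnorm2 : Integrable (fun ω => ‖X ω - X' ω‖ ^ 2) Pr := hXX'.norm.integrable_sq
  have hind : Integrable ((Set.indicator {ω | S ω ≠ S' ω} (fun _ => (1:ℝ)))) Pr :=
    (integrable_const (1:ℝ)).indicator hsmeas
  -- the dominating function
  set B : Ω → ℝ := fun ω => 2 * (f ω - g ω) ^ 2 + 2 * L ^ 2 * ‖X ω - X' ω‖ ^ 2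
      + 8 * M ^ 2 * Set.indicator {ω | S ω ≠ S' ω} (fun _ => (1:ℝ)) ω with hB_def
  have hBint : Integrable B Pr := by
    exact ((hfg.const_mul 2).add ((hnorm2.const_mul (2 * L ^ 2)))).add
      (hind.const_mul (8 * M ^ 2))
  -- pointwise bound
  have hpt : ∀ ω, (f ω - h ω) ^ 2 ≤ B ω := by
    intro ω
    have key : (g ω - h ω) ^ 2 ≤ L ^ 2 * ‖X ω - X' ω‖ ^ 2
        + 4 * M ^ 2 * Set.indicator {ω | S ω ≠ S' ω} (fun _ => (1:ℝ)) ω := by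
      by_cases hss : S ω = S' ω
      · have hIe : Set.indicator {ω | S ω ≠ S' ω} (fun _ => (1:ℝ)) ω = 0 := by
          simp [Set.indicator_of_notMem, hss]
        have hlip := hLip (S ω) (X ω) (X' ω)
        have hc : h ω = ηhat (X' ω, S ω) := by rw [hh_def]; simp [← hss]
        have habs : |h ω - g ω| ≤ L * ‖X' ω - X ω‖ := by
          rw [hc, hg_def]; exact hlip
        have hn : ‖X' ω - X ω‖ = ‖X ω - X' ω‖ := norm_sub_rev _ _
        rw [hIe]
        have h1 : |h ω - g ω| ≤ L * ‖X ω - X' ω‖ := by rwa [hn] at habs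
        nlinarith [abs_nonneg (h ω - g ω), sq_abs (h ω - g ω),
          mul_nonneg hL (norm_nonneg (X ω - X' ω))]
      · have hIe : Set.indicator {ω | S ω ≠ S' ω} (fun _ => (1:ℝ)) ω = 1 := by
          simp [Set.indicator_of_mem, hss]
        have hb : |g ω| ≤ M := hM (X ω) (S ω)
        have hc : |h ω| ≤ M := hM (X' ω) (S' ω)
        rw [hIe]
        have hb' := abs_le.mp hb
        have hc' := abs_le.mp hc
        nlinarith [sq_nonneg (L * ‖X ω - X' ω‖),
          mul_nonneg hL (norm_nonneg (X ω - X' ω)), sq_nonneg (L*‖X ω - X' ω‖)]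
    have : (f ω - h ω) ^ 2 ≤ 2 * (f ω - g ω) ^ 2 + 2 * (g ω - h ω) ^ 2 := by
      nlinarith [sq_nonneg (f ω - 2 * g ω + h ω)]
    rw [hB_def]
    simp only
    nlinarith [key]
  -- the coupling
  set γ : Measure (ℝ × ℝ) := Pr.map (fun ω => (f ω, h ω)) with hγ_def
  have hpair : Measurable (fun ω => (f ω, h ω)) := hf.prodMk hh
  have h1 : γ.map Prod.fst = Pr.map f := by
    rw [hγ_def, Measure.map_map measurable_fst hpair]; rfl
  have h2 : γ.map Prod.snd = Pr.map h := by
    rw [hγ_def, Measure.map_map measurable_snd hpair]; rfl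
  have hsm : AEStronglyMeasurable (fun z : ℝ × ℝ => (z.1 - z.2) ^ 2) γ :=
    ((continuous_fst.sub continuous_snd).pow 2).aestronglyMeasurable
  have h3 : (∫ z, (z.1 - z.2) ^ 2 ∂γ) = ∫ ω, (f ω - h ω) ^ 2 ∂Pr := by
    rw [hγ_def, integral_map hpair.aemeasurable hsm]
  have hmem : (∫ ω, (f ω - h ω) ^ 2 ∂Pr) ∈
      { c : ℝ | ∃ γ' : Measure (ℝ × ℝ),
        γ'.map Prod.fst = Pr.map f ∧ γ'.map Prod.snd = Pr.map h ∧
        c = ∫ z, (z.1 - z.2) ^ 2 ∂γ' } :=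
    ⟨γ, h1, h2, h3.symm⟩
  have hbdd : BddBelow { c : ℝ | ∃ γ' : Measure (ℝ × ℝ),
      γ'.map Prod.fst = Pr.map f ∧ γ'.map Prod.snd = Pr.map h ∧
      c = ∫ z, (z.1 - z.2) ^ 2 ∂γ' } := by
    refine ⟨0, fun c hc => ?_⟩
    obtain ⟨γ', -, -, rfl⟩ := hc
    exact integral_nonneg fun z => sq_nonneg _
  have hW : W2sq (Pr.map f) (Pr.map h) ≤ ∫ ω, (f ω - h ω) ^ 2 ∂Pr :=
    csInf_le hbdd hmem
  refine hW.trans ?_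
  have hmono : (∫ ω, (f ω - h ω) ^ 2 ∂Pr) ≤ ∫ ω, B ω ∂Pr :=
    integral_mono_of_nonneg (ae_of_all _ fun ω => sq_nonneg _) hBint
      (ae_of_all _ hpt)
  refine hmono.trans_eq ?_
  have i12 : Integrable
      (fun ω => 2 * (f ω - g ω) ^ 2 + 2 * L ^ 2 * ‖X ω - X' ω‖ ^ 2) Pr :=
    (hfg.const_mul 2).add (hnorm2.const_mul (2 * L ^ 2))
  have i3 : Integrable
      (fun ω => 8 * M ^ 2 * Set.indicator {ω | S ω ≠ S' ω} (fun _ => (1:ℝ)) ω) Pr :=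
    hind.const_mul (8 * M ^ 2)
  have step1 : (∫ ω, B ω ∂Pr)
      = (∫ ω, (2 * (f ω - g ω) ^ 2 + 2 * L ^ 2 * ‖X ω - X' ω‖ ^ 2) ∂Pr)
        + ∫ ω, 8 * M ^ 2 * Set.indicator {ω | S ω ≠ S' ω} (fun _ => (1:ℝ)) ω ∂Pr :=
    integral_add i12 i3
  have step2 : (∫ ω, (2 * (f ω - g ω) ^ 2 + 2 * L ^ 2 * ‖X ω - X' ω‖ ^ 2) ∂Pr)
      = (∫ ω, 2 * (f ω - g ω) ^ 2 ∂Pr) + ∫ ω, 2 * L ^ 2 * ‖X ω - X' ω‖ ^ 2 ∂Pr :=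
    integral_add (hfg.const_mul 2) (hnorm2.const_mul (2 * L ^ 2))
  have hindint : (∫ ω, Set.indicator {ω | S ω ≠ S' ω} (fun _ => (1:ℝ)) ω ∂Pr)
      = (Pr {ω | S ω ≠ S' ω}).toReal := by
    rw [integral_indicator_const (1:ℝ) hsmeas]; simp; rfl
  rw [step1, step2, integral_const_mul, integral_const_mul, integral_const_mul, hindint]
end
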